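/- arXiv:1301.5409 — 3 statements merged into one kernel-verified Lean document; each statement's English description precedes it below -/
import Mathlib

section
/- Let n ≥ 1 be an integer, s_n = sin(π/(2n+1)), ν_n = 1 - s_n⁴, G = ν_n · P(π/(2n+1)) and H = ν_n · R(π/(2n+1)). Then for every positive integer i, (G · H^n · G)^i = (-(ν_n^{n+2})/cos(π/(2n+1)))^i · P(π/(2n+1)), and hence ‖(G H^n G)^i‖ ≥ |ν_n^{n+2}/cos(π/(2n+1))|^i. -/
open Real Matrix

noncomputable def P (φ : ℝ) : Matrix (Fin 2) (Fin 2) ℝ := !![1, -Real.tan φ; 0, 0]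

noncomputable def R (φ : ℝ) : Matrix (Fin 2) (Fin 2) ℝ :=
  !![Real.cos (2*φ), -Real.sin (2*φ); Real.sin (2*φ), Real.cos (2*φ)]

noncomputable def opNorm (A : Matrix (Fin 2) (Fin 2) ℝ) : ℝ :=
  ‖Matrix.toEuclideanCLM (𝕜 := ℝ) A‖

lemma R_pow (φ : ℝ) (k : ℕ) :
    R φ ^ k = !![Real.cos (2*k*φ), -Real.sin (2*k*φ); Real.sin (2*k*φ), Real.cos (2*k*φ)] := by
  induction k with
  | zero => simp [Matrix.one_fin_two]
  | succ k ih =>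
    rw [pow_succ, ih, R, Matrix.mul_fin_two]
    have : 2 * ((k:ℝ)+1) * φ = 2*k*φ + 2*φ := by ring
    push_cast
    rw [this, Real.cos_add, Real.sin_add]
    congr 1 <;> ring

lemma P_mul_P (φ : ℝ) : P φ * P φ = P φ := by
  rw [P, Matrix.mul_fin_two]; norm_num

lemma P_pow (φ : ℝ) (i : ℕ) (hi : 1 ≤ i) : P φ ^ i = P φ := by
  induction i with
  | zero => omega
  | succ i ih =>
    rcases Nat.eq_or_lt_of_le hi with h | h
    · simp [← h]
    · rw [pow_succ, ih (by omega), P_mul_P]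

lemma opNorm_P_ge (φ : ℝ) : 1 ≤ opNorm (P φ) := by
  have h := (Matrix.toEuclideanCLM (𝕜 := ℝ) (P φ)).unit_le_opNorm
    ((WithLp.equiv 2 (Fin 2 → ℝ)).symm ![1, 0]) ?_
  · refine le_trans ?_ h
    rw [show (WithLp.equiv 2 (Fin 2 → ℝ)).symm ![1, 0] = WithLp.toLp 2 ![1, 0] from rfl,
      Matrix.toEuclideanCLM_toLp, ← Matrix.toLin'_apply]
    have : Matrix.toLin' (P φ) ![1, 0] = ![1, 0] := by
      rw [Matrix.toLin'_apply, P]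
      ext j
      fin_cases j <;> simp [Matrix.mulVec, dotProduct, Fin.sum_univ_two]
    rw [this]
    rw [EuclideanSpace.norm_eq]
    simp [Fin.sum_univ_two]
  · rw [EuclideanSpace.norm_eq]
    simp [Fin.sum_univ_two]

set_option synthInstance.maxHeartbeats 1000000 in
theorem stmt10 (n : ℕ) (hn : 1 ≤ n) (s ν : ℝ)
    (hs : s = Real.sin (Real.pi / (2 * (n : ℝ) + 1))) (hν : ν = 1 - s ^ 4)
    (G H : Matrix (Fin 2) (Fin 2) ℝ)
    (hG : G = ν • P (Real.pi / (2 * (n : ℝ) + 1)))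
    (hH : H = ν • R (Real.pi / (2 * (n : ℝ) + 1)))
    (i : ℕ) (hi : 1 ≤ i) :
    (G * H ^ n * G) ^ i =
      (-(ν ^ (n + 2)) / Real.cos (Real.pi / (2 * (n : ℝ) + 1))) ^ i •
        P (Real.pi / (2 * (n : ℝ) + 1)) ∧
    |ν ^ (n + 2) / Real.cos (Real.pi / (2 * (n : ℝ) + 1))| ^ i ≤
      opNorm ((G * H ^ n * G) ^ i) := by
  set φ := Real.pi / (2 * (n : ℝ) + 1) with hφ
  have hden : (0:ℝ) < 2 * (n : ℝ) + 1 := by positivity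
  have hφpos : 0 < φ := div_pos Real.pi_pos hden
  have hφlt : φ < Real.pi / 2 := by
    rw [hφ, div_lt_div_iff₀ hden two_pos]
    nlinarith [Real.pi_pos, (by exact_mod_cast hn : (1:ℝ) ≤ n)]
  have hcos : 0 < Real.cos φ := Real.cos_pos_of_mem_Ioo ⟨by linarith, hφlt⟩
  have hπ : 2*(n:ℝ)*φ + φ = Real.pi := by
    rw [hφ]; field_simp
  have hkey : Real.cos (2*n*φ) - Real.tan φ * Real.sin (2*n*φ) = -1 / Real.cos φ := by
    have h1 : Real.cos (2*n*φ + φ) = -1 := by rw [hπ, Real.cos_pi]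
    rw [Real.cos_add] at h1
    rw [Real.tan_eq_sin_div_cos]
    field_simp
    linear_combination h1
  set c : ℝ := -(ν ^ (n + 2)) / Real.cos φ with hc
  have hPRP : P φ * R φ ^ n * P φ = (-1 / Real.cos φ) • P φ := by
    ext a b
    fin_cases a <;> fin_cases b <;>
      simp only [Matrix.mul_apply, Fin.sum_univ_two, R_pow, P, Matrix.smul_apply,
        Matrix.cons_val', Matrix.cons_val_zero, Matrix.cons_val_one, Matrix.head_cons,
        Matrix.empty_val', Matrix.cons_val_fin_one, Matrix.head_fin_const, Matrix.of_apply,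
        smul_eq_mul, Fin.isValue, Fin.zero_eta, Fin.mk_one]
    · linear_combination hkey
    · linear_combination (-Real.tan φ) * hkey
    · ring
    · ring
  have hGHG : G * H ^ n * G = c • P φ := by
    rw [hG, hH, smul_pow]
    simp only [Matrix.smul_mul, Matrix.mul_smul, smul_smul, hPRP]
    congr 1
    rw [hc]
    field_simp
    ring
  have hmain : (G * H ^ n * G) ^ i = c ^ i • P φ := by
    rw [hGHG, smul_pow, P_pow φ i hi]
  refine ⟨hmain, ?_⟩
  rw [hmain]
  have hsm : Matrix.toEuclideanCLM (𝕜 := ℝ) (c ^ i • P φ) =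
      c ^ i • Matrix.toEuclideanCLM (𝕜 := ℝ) (P φ) :=
    _root_.map_smul (Matrix.toEuclideanCLM (𝕜 := ℝ) : Matrix (Fin 2) (Fin 2) ℝ ≃⋆ₐ[ℝ] _) _ _
  have : opNorm (c ^ i • P φ) = |c ^ i| * opNorm (P φ) := by
    rw [opNorm, hsm, ← Real.norm_eq_abs]
    exact norm_smul (c ^ i) (Matrix.toEuclideanCLM (𝕜 := ℝ) (P φ))
  rw [this]
  have h1 : |ν ^ (n + 2) / Real.cos φ| ^ i = |c ^ i| := by
    rw [abs_pow, hc, abs_div, abs_div, abs_neg]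
  rw [h1]
  nlinarith [opNorm_P_ge φ, abs_nonneg (c ^ i)]
end

section
/- For all sufficiently large positive integers n, with s_n = sin(π/(2n+1)), G = (1 - s_n⁴)·P(π/(2n+1)), H = (1 - s_n⁴)·R(π/(2n+1)), there exists a sequence A : ℕ → Matrix (Fin 2) (Fin 2) ℝ with each A(k) ∈ {G, H} such that the operator norms of the products A(k)·A(k-1)·⋯·A(1) are unbounded as k → ∞. -/
open Real Matrix

/-- `prods A k = A k * A (k-1) * ⋯ * A 1` (with `prods A 0 = 1`). -/
noncomputable def prods (A : ℕ → Matrix (Fin 2) (Fin 2) ℝ) : ℕ → Matrix (Fin 2) (Fin 2) ℝ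
  | 0 => 1
  | k + 1 => A (k + 1) * prods A k

noncomputable def Rot (θ : ℝ) : Matrix (Fin 2) (Fin 2) ℝ :=
  !![Real.cos θ, -Real.sin θ; Real.sin θ, Real.cos θ]

theorem Rot_mul (θ ψ : ℝ) : Rot θ * Rot ψ = Rot (θ + ψ) := by
  ext i j
  fin_cases i <;> fin_cases j <;>
    simp [Rot, Matrix.mul_apply, Fin.sum_univ_two, Real.cos_add, Real.sin_add] <;> ring

theorem Rot_pow (θ : ℝ) (j : ℕ) : Rot θ ^ j = Rot (j * θ) := by
  induction j with
  | zero => ext i j; fin_cases i <;> fin_cases j <;> simp [Rot]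
  | succ k ih => rw [pow_succ, ih, Rot_mul]; push_cast; ring_nf

/-- product shift lemma -/
theorem prods_add (A : ℕ → Matrix (Fin 2) (Fin 2) ℝ) (a b : ℕ) :
    prods A (a + b) = prods (fun k => A (a + k)) b * prods A a := by
  induction b with
  | zero => simp [prods]
  | succ k ih =>
    rw [← Nat.add_assoc, prods, prods, ih, Matrix.mul_assoc]
    rfl

theorem prods_const (B : ℕ → Matrix (Fin 2) (Fin 2) ℝ) (H : Matrix (Fin 2) (Fin 2) ℝ)
    (j : ℕ) (h : ∀ k, 1 ≤ k → k ≤ j → B k = H) : prods B j = H ^ j := by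
  induction j with
  | zero => simp [prods]
  | succ k ih =>
    rw [prods, pow_succ', ih (fun m h1 h2 => h m h1 (h2.trans (Nat.le_succ k))),
      h (k+1) (Nat.le_add_left 1 k) le_rfl]


theorem opNorm_smul_E_ge (a : ℝ) : |a| ≤ opNorm (a • !![(1:ℝ),0;0,0]) := by
  have h := (Matrix.toEuclideanCLM (𝕜 := ℝ) (a • !![(1:ℝ),0;0,0])).le_opNorm
      ((WithLp.equiv 2 (Fin 2 → ℝ)).symm ![1,0])
  rw [show (Matrix.toEuclideanCLM (𝕜 := ℝ) (a • !![(1:ℝ),0;0,0])) ((WithLp.equiv 2 (Fin 2 → ℝ)).symm ![1,0]) = (WithLp.equiv 2 (Fin 2 → ℝ)).symm (Matrix.toLin' (a • !![(1:ℝ),0;0,0]) ![1,0]) from rfl] at h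
  have h1 : ‖(WithLp.equiv 2 (Fin 2 → ℝ)).symm ![(1:ℝ),0]‖ = 1 := by
    simp [EuclideanSpace.norm_eq, Fin.sum_univ_two]
  have h2 : Matrix.toLin' (a • !![(1:ℝ),0;0,0]) ![1,0] = ![a,0] := by
    ext i
    fin_cases i <;>
      simp [Matrix.toLin'_apply, Matrix.mulVec, dotProduct, Fin.sum_univ_two]
  have h3 : ‖(WithLp.equiv 2 (Fin 2 → ℝ)).symm ![(a:ℝ),0]‖ = |a| := by
    simp [EuclideanSpace.norm_eq, Fin.sum_univ_two, Real.sqrt_sq_eq_abs]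
  rw [h2, h3, h1, mul_one] at h
  exact h

set_option maxHeartbeats 1000000 in
theorem stmt12 :
    ∃ N : ℕ, ∀ n : ℕ, N ≤ n →
      ∀ (s : ℝ), s = Real.sin (Real.pi / (2 * (n : ℝ) + 1)) →
      ∀ (G H : Matrix (Fin 2) (Fin 2) ℝ),
        G = (1 - s ^ 4) • P (Real.pi / (2 * (n : ℝ) + 1)) →
        H = (1 - s ^ 4) • R (Real.pi / (2 * (n : ℝ) + 1)) →
        ∃ A : ℕ → Matrix (Fin 2) (Fin 2) ℝ,
          (∀ k, A k = G ∨ A k = H) ∧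
          ∀ C : ℝ, ∃ k : ℕ, C < opNorm (prods A k) := by
  use 10
  intro n hn s hs G H hG hH
  set φ : ℝ := Real.pi / (2 * (n : ℝ) + 1) with hφ
  have hden : (0:ℝ) < 2 * (n : ℝ) + 1 := by positivity
  have hφpos : 0 < φ := by positivity
  have hφlt : φ < Real.pi / 2 := by
    rw [hφ, div_lt_div_iff₀ hden two_pos]
    have h10 : (10:ℝ) ≤ n := by exact_mod_cast hn
    nlinarith [Real.pi_pos]
  have hcos : 0 < Real.cos φ := Real.cos_pos_of_mem_Ioo ⟨by linarith, hφlt⟩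
  have hsin : 0 < s := hs ▸ Real.sin_pos_of_pos_of_lt_pi hφpos (by linarith [Real.pi_pos])
  have hs1 : s < 1 := by
    nlinarith [hs ▸ Real.sin_sq_add_cos_sq φ]
  have hc0 : 0 < 1 - s^4 := by
    have : s^4 < 1 := pow_lt_one₀ hsin.le hs1 (by norm_num)
    linarith
  have hnφ : (n:ℝ) * (2*φ) = Real.pi - φ := by
    rw [hφ]; field_simp; ring
  have hRrot : R φ = Rot (2*φ) := rfl
  set c : ℝ := 1 - s^4 with hc
  set ρ : ℝ := c^(n+1) / Real.cos φ with hρdef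
  set E : Matrix (Fin 2) (Fin 2) ℝ := !![1,0;0,0] with hE
  have hPRot : P φ * Rot (Real.pi - φ) = (-(Real.cos φ)⁻¹) • E := by
    have hpyth := Real.sin_sq_add_cos_sq φ
    ext i j
    fin_cases i <;> fin_cases j <;>
      simp [P, Rot, E, Matrix.mul_apply, Fin.sum_univ_two, Real.cos_pi_sub,
        Real.sin_pi_sub, Real.tan_eq_sin_div_cos] <;>
      field_simp <;> nlinarith
  have hM : G * H ^ n = (-ρ) • E := by
    have hHn : H ^ n = c^n • Rot ((n:ℝ) * (2*φ)) := by
      rw [hH, hRrot, smul_pow, Rot_pow]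
    rw [hG, hHn, hnφ, Matrix.smul_mul, Matrix.mul_smul, smul_smul, hPRot, smul_smul]
    congr 1
    rw [hρdef]
    field_simp [hcos.ne']
    ring
  have hE2 : E * E = E := by
    ext i j
    fin_cases i <;> fin_cases j <;> simp [E, Matrix.mul_apply, Fin.sum_univ_two]
  have hMpow : ∀ m : ℕ, 1 ≤ m → ((-ρ) • E)^m = (-ρ)^m • E := by
    intro m hm
    induction m with
    | zero => omega
    | succ k ih =>
      rcases Nat.eq_or_lt_of_le hm with h1 | h1
      · rw [← h1]; simp
      · rw [pow_succ, pow_succ, ih (by omega), Matrix.smul_mul, Matrix.mul_smul,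
          smul_smul, hE2]
  -- ρ > 1
  have hsφ : s ≤ φ := by
    rw [hs]; exact Real.sin_le hφpos.le
  have hρ1 : 1 < ρ := by
    rw [hρdef, lt_div_iff₀ hcos, one_mul]
    have hcos2 : Real.cos φ ≤ 1 - s^2/2 := by
      have hp2 := Real.sin_sq_add_cos_sq (φ/2)
      have hsin2 : Real.sin φ = 2 * Real.sin (φ/2) * Real.cos (φ/2) := by
        rw [← Real.sin_two_mul]; congr 1; ring
      have hcos2' : Real.cos φ = 2 * Real.cos (φ/2)^2 - 1 := by
        rw [← Real.cos_two_mul]; congr 1; ring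
      rw [hs, hsin2, hcos2']
      nlinarith [sq_nonneg (Real.sin (φ/2)), sq_nonneg (Real.sin (φ/2)^2),
        sq_nonneg (Real.cos (φ/2))]
    have hsmall : ((n:ℝ)+1) * s^2 < 1/2 := by
      have hu : s * (2*(n:ℝ)+1) ≤ Real.pi := by
        rw [hφ] at hsφ
        calc s * (2*(n:ℝ)+1) ≤ (Real.pi / (2*(n:ℝ)+1)) * (2*(n:ℝ)+1) := by
              apply mul_le_mul_of_nonneg_right hsφ hden.le
          _ = Real.pi := by field_simp
      have hu' : s * (2*(n:ℝ)+1) < 3.15 := lt_of_le_of_lt hu Real.pi_lt_d2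
      have h10 : (10:ℝ) ≤ n := by exact_mod_cast hn
      nlinarith [mul_pos hsin hden, sq_nonneg ((n:ℝ) - 10), sq_nonneg s,
        mul_pos (mul_pos hsin hsin) hden]
    have hbern : 1 + ((n:ℝ)+1) * (-s^4) ≤ (1 + (-s^4))^(n+1) := by
      have := one_add_mul_le_pow (a := -s^4) (by nlinarith) (n+1)
      simpa using this
    have hmid : 1 - s^2/2 < 1 - ((n:ℝ)+1) * s^4 := by
      have h4 : (((n:ℝ)+1) * s^2) * (s*s) < (1/2) * (s*s) :=
        mul_lt_mul_of_pos_right hsmall (mul_pos hsin hsin)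
      nlinarith [h4]
    calc Real.cos φ ≤ 1 - s^2/2 := hcos2
      _ < 1 - ((n:ℝ)+1) * s^4 := hmid
      _ = 1 + ((n:ℝ)+1) * (-s^4) := by ring
      _ ≤ (1 + (-s^4))^(n+1) := hbern
      _ = c^(n+1) := by rw [hc]; ring_nf
  have hρ0 : 0 < ρ := lt_trans one_pos hρ1
  -- the sequence
  refine ⟨fun k => if (n+1) ∣ k then G else H, fun k => ?_, ?_⟩
  · by_cases h : (n+1) ∣ k <;> simp [h]
  set A : ℕ → Matrix (Fin 2) (Fin 2) ℝ := fun k => if (n+1) ∣ k then G else H with hA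
  have hprod : ∀ m : ℕ, prods A (m*(n+1)) = (G * H^n)^m := by
    intro m
    induction m with
    | zero => simp [prods]
    | succ j ih =>
      have : (j+1)*(n+1) = j*(n+1) + (n+1) := by ring
      rw [this, prods_add, ih, pow_succ']
      congr 1
      have hB : prods (fun k => A (j*(n+1) + k)) (n+1)
          = A (j*(n+1) + (n+1)) * prods (fun k => A (j*(n+1) + k)) n := rfl
      rw [hB]
      have h1 : A (j*(n+1) + (n+1)) = G := by
        have hd : (n+1) ∣ (j*(n+1) + (n+1)) := ⟨j+1, by ring⟩
        rw [hA]
        simp only [hd, if_true]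
      have h2 : prods (fun k => A (j*(n+1) + k)) n = H^n := by
        apply prods_const
        intro k hk1 hk2
        rw [hA]
        simp only
        rw [if_neg]
        intro hdvd
        have : (n+1) ∣ k := (Nat.dvd_add_right (dvd_mul_left (n+1) j)).mp hdvd
        have := Nat.le_of_dvd (by omega) this
        omega
      rw [h1, h2]
  intro C
  obtain ⟨m, hm⟩ := pow_unbounded_of_one_lt C hρ1
  refine ⟨(m+1)*(n+1), ?_⟩
  rw [hprod (m+1), hM, hMpow (m+1) (by omega)]
  have hnorm := opNorm_smul_E_ge ((-ρ)^(m+1))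
  rw [← hE] at hnorm
  have habs : |(-ρ)^(m+1)| = ρ^(m+1) := by
    rw [abs_pow, abs_neg, abs_of_pos hρ0]
  rw [habs] at hnorm
  have : C < ρ^(m+1) := lt_of_lt_of_le hm (pow_le_pow_right₀ hρ1.le (by omega))
  linarith
end

section
/- The set of pairs (A, B) of 2×2 real matrices for which there exist c and q < 1 with ‖C_k ⋯ C_1‖ ≤ c q^k for all k and all choices C_i ∈ {A, B} is an open subset of the space of pairs of 2×2 real matrices. -/
abbrev Mat := Matrix (Fin 2) (Fin 2) ℝ

lemma opNorm_nonneg (A : Mat) : 0 ≤ opNorm A := norm_nonneg _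
lemma opNorm_one : opNorm 1 = 1 := by rw [opNorm, map_one]; exact norm_one
lemma opNorm_mul_le (A B : Mat) : opNorm (A*B) ≤ opNorm A * opNorm B := by
  rw [opNorm, map_mul]; exact norm_mul_le _ _

lemma exists_ofFn (A B : Mat) : ∀ (n : ℕ) (l : List Mat), l.length = n →
    (∀ X ∈ l, X = A ∨ X = B) →
    ∃ f : Fin n → Bool, l = List.ofFn (fun i => if f i then A else B) := by
  intro n
  induction n with
  | zero => intro l hl _; exact ⟨fun _ => true, by simpa using List.length_eq_zero_iff.mp hl⟩
  | succ n ih =>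
    intro l hl hmem
    cases l with
    | nil => simp at hl
    | cons a t =>
      obtain ⟨f, hf⟩ := ih t (by simpa using hl) (fun X hX => hmem X (List.mem_cons_of_mem _ hX))
      rcases hmem a (List.mem_cons_self) with ha | ha
      · refine ⟨Fin.cons true f, ?_⟩
        rw [List.ofFn_succ]
        simp [Fin.cons_zero, Fin.cons_succ, ha, ← hf]
      · refine ⟨Fin.cons false f, ?_⟩
        rw [List.ofFn_succ]
        simp [Fin.cons_zero, Fin.cons_succ, ha, ← hf]

lemma prod_le_pow (M : ℝ) (hM : 1 ≤ M) (A B : Mat) (hA : opNorm A ≤ M) (hB : opNorm B ≤ M) :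
    ∀ l : List Mat, (∀ X ∈ l, X = A ∨ X = B) → opNorm l.prod ≤ M ^ l.length := by
  intro l
  induction l with
  | nil => intro _; simp [opNorm_one]
  | cons a t ih =>
    intro hmem
    have ht := ih (fun X hX => hmem X (List.mem_cons_of_mem _ hX))
    have ha : opNorm a ≤ M := by
      rcases hmem a (List.mem_cons_self) with h | h <;> rw [h] <;> assumption
    calc opNorm (a :: t).prod = opNorm (a * t.prod) := by rw [List.prod_cons]
      _ ≤ opNorm a * opNorm t.prod := opNorm_mul_le _ _
      _ ≤ M * M ^ t.length := by
          exact mul_le_mul ha ht (opNorm_nonneg _) (le_trans zero_le_one hM)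
      _ = M ^ (a :: t).length := by rw [List.length_cons, pow_succ]; ring

lemma opNorm_continuous : Continuous opNorm := by
  have h : Continuous fun M : Mat => Matrix.toEuclideanCLM (𝕜 := ℝ) M :=
    LinearMap.continuous_of_finiteDimensional
      ({ toFun := fun M => Matrix.toEuclideanCLM (𝕜 := ℝ) M,
         map_add' := by simp, map_smul' := by simp } : Mat →ₗ[ℝ] _)
  exact continuous_norm.comp h

lemma cont_prod : ∀ (n : ℕ) (f : Fin n → Bool),
    Continuous fun p : Mat × Mat =>
      (List.ofFn (fun i => if f i then p.1 else p.2)).prod := by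
  intro n
  induction n with
  | zero =>
    intro f
    simp only [List.ofFn_zero, List.prod_nil]
    exact continuous_const
  | succ n ih =>
    intro f
    have h0 : Continuous fun p : Mat × Mat => (if f 0 then p.1 else p.2) := by
      cases hf : f 0
      · simpa [hf] using (continuous_snd : Continuous fun p : Mat × Mat => p.2)
      · simpa [hf] using (continuous_fst : Continuous fun p : Mat × Mat => p.1)
    have ht := ih (fun i => f i.succ)
    simp only [List.ofFn_succ, List.prod_cons]
    exact Continuous.matrix_mul h0 ht

theorem stmt17 :
    IsOpen {p : Matrix (Fin 2) (Fin 2) ℝ × Matrix (Fin 2) (Fin 2) ℝ |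
      ∃ c q : ℝ, q < 1 ∧
        ∀ l : List (Matrix (Fin 2) (Fin 2) ℝ), (∀ B ∈ l, B = p.1 ∨ B = p.2) →
          opNorm l.prod ≤ c * q ^ l.length} := by
  have hset : {p : Mat × Mat |
      ∃ c q : ℝ, q < 1 ∧
        ∀ l : List Mat, (∀ B ∈ l, B = p.1 ∨ B = p.2) →
          opNorm l.prod ≤ c * q ^ l.length} =
      ⋃ k : ℕ, {p : Mat × Mat | ∀ f : Fin (k+1) → Bool,
        opNorm (List.ofFn (fun i => if f i then p.1 else p.2)).prod < 1} := by
    ext p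
    simp only [Set.mem_setOf_eq, Set.mem_iUnion]
    constructor
    · rintro ⟨c, q, hq1, hbound⟩
      -- c ≥ 1
      have hc : 1 ≤ c := by
        have := hbound [] (by simp)
        simpa [opNorm_one] using this
      have hq0 : 0 ≤ q := by
        by_contra h
        push_neg at h
        have h1 := hbound [p.1] (by simp)
        have h2 : c * q ^ 1 < 0 :=
          mul_neg_of_pos_of_neg (lt_of_lt_of_le zero_lt_one hc) (by simpa using h)
        exact absurd (lt_of_le_of_lt (le_trans (opNorm_nonneg _) h1) h2) (lt_irrefl 0)
      have htend : Filter.Tendsto (fun n : ℕ => c * q ^ n) Filter.atTop (nhds 0) := by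
        simpa using (tendsto_pow_atTop_nhds_zero_of_lt_one hq0 hq1).const_mul c
      have hev : ∀ᶠ n : ℕ in Filter.atTop, c * q ^ n < 1 :=
        htend.eventually (gt_mem_nhds (by norm_num))
      obtain ⟨N, hN⟩ := Filter.eventually_atTop.mp hev
      refine ⟨N, fun f => ?_⟩
      have hmem : ∀ X ∈ List.ofFn (fun i : Fin (N+1) => if f i then p.1 else p.2),
          X = p.1 ∨ X = p.2 := by
        intro X hX
        rw [List.mem_ofFn] at hX
        obtain ⟨i, hi⟩ := hX
        by_cases h : f i
        · left; rw [← hi]; simp [h]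
        · right; rw [← hi]; simp [h]
      have := hbound _ hmem
      rw [List.length_ofFn] at this
      exact lt_of_le_of_lt this (hN (N+1) (Nat.le_succ N))
    · rintro ⟨k, hk⟩
      set m := k + 1 with hm
      have hm0 : 0 < m := Nat.succ_pos k
      set A := p.1
      set B := p.2
      -- r = max over choices
      have hne : (Finset.univ : Finset (Fin m → Bool)).Nonempty := Finset.univ_nonempty
      set r := Finset.sup' Finset.univ hne
        (fun f => opNorm (List.ofFn (fun i => if f i then A else B)).prod) with hrdef
      have hr1 : r < 1 := by
        rw [hrdef, Finset.sup'_lt_iff]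
        exact fun f _ => hk f
      have hr0 : 0 ≤ r :=
        le_trans (opNorm_nonneg ((List.ofFn (fun i : Fin m =>
            if (fun _ => true) i then A else B)).prod))
          (Finset.le_sup' (fun f : Fin m → Bool =>
            opNorm (List.ofFn (fun i => if f i then A else B)).prod)
            (Finset.mem_univ (fun _ => true)))
      have hrle : ∀ l : List Mat, l.length = m → (∀ X ∈ l, X = A ∨ X = B) →
          opNorm l.prod ≤ r := by
        intro l hl hmem
        obtain ⟨f, hf⟩ := exists_ofFn A B m l hl hmem
        rw [hf]
        exact Finset.le_sup' (fun f : Fin m → Bool =>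
          opNorm (List.ofFn (fun i => if f i then A else B)).prod) (Finset.mem_univ f)
      set M : ℝ := max (max (opNorm A) (opNorm B)) 1 with hMdef
      have hM1 : 1 ≤ M := le_max_right _ _
      have hMA : opNorm A ≤ M := le_trans (le_max_left _ _) (le_max_left _ _)
      have hMB : opNorm B ≤ M := le_trans (le_max_right _ _) (le_max_left _ _)
      -- key bound by strong induction
      have key : ∀ n : ℕ, ∀ l : List Mat, (∀ X ∈ l, X = A ∨ X = B) → l.length = n →
          opNorm l.prod ≤ M ^ m * r ^ (n / m) := by
        intro n
        induction n using Nat.strong_induction_on with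
        | _ n ih =>
          intro l hmem hl
          by_cases hcase : n < m
          · rw [Nat.div_eq_of_lt hcase, pow_zero, mul_one]
            calc opNorm l.prod ≤ M ^ l.length := prod_le_pow M hM1 A B hMA hMB l hmem
              _ ≤ M ^ m := pow_le_pow_right₀ hM1 (hl ▸ le_of_lt hcase)
          · push_neg at hcase
            have hsplit : l = l.take m ++ l.drop m := (List.take_append_drop m l).symm
            have hlen1 : (l.take m).length = m := by
              rw [List.length_take, hl]; exact min_eq_left hcase
            have hlen2 : (l.drop m).length = n - m := by rw [List.length_drop, hl]
            have hmem1 : ∀ X ∈ l.take m, X = A ∨ X = B :=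
              fun X hX => hmem X (List.mem_of_mem_take hX)
            have hmem2 : ∀ X ∈ l.drop m, X = A ∨ X = B :=
              fun X hX => hmem X (List.mem_of_mem_drop hX)
            have h1 : opNorm (l.take m).prod ≤ r := hrle _ hlen1 hmem1
            have h2 : opNorm (l.drop m).prod ≤ M ^ m * r ^ ((n - m) / m) :=
              ih (n - m) (Nat.sub_lt (lt_of_lt_of_le hm0 hcase) hm0) _ hmem2 hlen2
            have hdiv : n / m = (n - m) / m + 1 := Nat.div_eq_sub_div hm0 hcase
            calc opNorm l.prod = opNorm ((l.take m).prod * (l.drop m).prod) := by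
                  conv_lhs => rw [hsplit]
                  rw [List.prod_append]
              _ ≤ opNorm (l.take m).prod * opNorm (l.drop m).prod := opNorm_mul_le _ _
              _ ≤ r * (M ^ m * r ^ ((n - m) / m)) :=
                  mul_le_mul h1 h2 (opNorm_nonneg _) hr0
              _ = M ^ m * r ^ (n / m) := by rw [hdiv, pow_succ]; ring
      -- choose q
      obtain ⟨q, hq0, hq1, hrq⟩ : ∃ q : ℝ, 0 < q ∧ q < 1 ∧ r ≤ q ^ m := by
        set r' : ℝ := max r (1/2) with hr'
        have hr'0 : 0 < r' := lt_of_lt_of_le (by norm_num) (le_max_right _ _)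
        have hr'1 : r' < 1 := max_lt hr1 (by norm_num)
        refine ⟨r' ^ ((m : ℝ)⁻¹), Real.rpow_pos_of_pos hr'0 _, ?_, ?_⟩
        · exact Real.rpow_lt_one hr'0.le hr'1 (by positivity)
        · have : (r' ^ ((m : ℝ)⁻¹)) ^ m = r' := by
            rw [← Real.rpow_natCast (r' ^ ((m : ℝ)⁻¹)) m, ← Real.rpow_mul hr'0.le,
              inv_mul_cancel₀ (by exact_mod_cast hm0.ne')]
            exact Real.rpow_one r'
          rw [this]; exact le_max_left _ _
      refine ⟨M ^ m / q ^ m, q, hq1, ?_⟩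
      intro l hmem
      set n := l.length with hn
      calc opNorm l.prod ≤ M ^ m * r ^ (n / m) := key n l hmem rfl
        _ ≤ M ^ m * (q ^ m) ^ (n / m) := by
            refine mul_le_mul_of_nonneg_left (pow_le_pow_left₀ hr0 hrq _) (by positivity)
        _ = M ^ m * q ^ (m * (n / m)) := by rw [← pow_mul]
        _ ≤ M ^ m * (q ^ n / q ^ m) := by
            refine mul_le_mul_of_nonneg_left ?_ (by positivity)
            have hmn : q ^ (m * (n / m)) * q ^ (n % m) = q ^ n := by
              rw [← pow_add, Nat.div_add_mod]
            have hle : q ^ m ≤ q ^ (n % m) :=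
              pow_le_pow_of_le_one hq0.le hq1.le (le_of_lt (Nat.mod_lt n hm0))
            have heq : q ^ (m * (n / m)) = q ^ n / q ^ (n % m) := by
              rw [eq_div_iff (by positivity)]; exact hmn
            rw [heq]
            exact div_le_div_of_nonneg_left (by positivity) (by positivity) hle
        _ = M ^ m / q ^ m * q ^ n := by ring
  rw [hset]
  refine isOpen_iUnion fun k => ?_
  have : {p : Mat × Mat | ∀ f : Fin (k+1) → Bool,
      opNorm (List.ofFn (fun i => if f i then p.1 else p.2)).prod < 1} =
      ⋂ f : Fin (k+1) → Bool, {p : Mat × Mat |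
        opNorm (List.ofFn (fun i => if f i then p.1 else p.2)).prod < 1} := by
    ext p; simp
  rw [this]
  refine isOpen_iInter_of_finite fun f => ?_
  have hcont : Continuous fun p : Mat × Mat =>
      opNorm (List.ofFn (fun i : Fin (k+1) => if f i then p.1 else p.2)).prod :=
    opNorm_continuous.comp (cont_prod (k+1) f)
  exact IsOpen.preimage hcont isOpen_Iio
end
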